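/- (Lemma 4.1) Let M be a partial matrix over a field F and v a partial column on the same rows. If for every completion M̄ of M there exists a completion v̄ of v lying in the column space of M̄, then mr([v | M]) = mr(M). -/

import Mathlib

/-- `N` is a completion of the partial matrix `(M, Ω)`: it agrees with `M`
on all known positions `Ω`. -/
def IsCompletion {F m n : Type*} [Field F] (M : Matrix m n F) (Ω : Set (m × n))
    (N : Matrix m n F) : Prop :=
  ∀ p ∈ Ω, N p.1 p.2 = M p.1 p.2

/-- The minimum rank of the partial matrix `(M, Ω)`: the minimum of the ranks of
its completions. -/
noncomputable def mr {F m n : Type*} [Field F] [Fintype m] [Fintype n]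
    (M : Matrix m n F) (Ω : Set (m × n)) : ℕ :=
  sInf {r | ∃ N : Matrix m n F, IsCompletion M Ω N ∧ N.rank = r}

/-- The partial matrix `[u | A]`: the partial column `u` (with known row set `Ωu`)
adjoined as an extra (first) column to `A`. -/
def augMat {F m n : Type*} [Field F] (u : m → F) (A : Matrix m n F) :
    Matrix m (Unit ⊕ n) F :=
  Matrix.of fun i => Sum.elim (fun _ => u i) (A i)

/-- Known positions of the partial matrix `[u | A]`, inherited from `Ωu` and `ΩA`. -/
def augSet {m n : Type*} (Ωu : Set m) (ΩA : Set (m × n)) : Set (m × (Unit ⊕ n)) :=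
  {p | Sum.elim (fun _ => p.1 ∈ Ωu) (fun j => (p.1, j) ∈ ΩA) p.2}

/-- `zero (u, A) = 1`, as a proposition: every completion of `[u | A]` attaining the
minimum rank has zero `u`-column. -/
def zeroProp {F m n : Type*} [Field F] [Fintype m] [Fintype n]
    (u : m → F) (Ωu : Set m) (A : Matrix m n F) (ΩA : Set (m × n)) : Prop :=
  ∀ N : Matrix m (Unit ⊕ n) F, IsCompletion (augMat u A) (augSet Ωu ΩA) N →
    N.rank = mr (augMat u A) (augSet Ωu ΩA) → ∀ i, N i (Sum.inl ()) = 0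
open Matrix in
/-- Lemma 4.1: if for every completion `N` of the partial matrix `M` there is a
completion of the partial column `v` lying in the column space of `N`, then
`mr [v | M] = mr M`. -/
theorem mr_aug_eq_of_col_space {F m n : Type*} [Field F] [Fintype m] [Fintype n]
    (M : Matrix m n F) (ΩM : Set (m × n)) (v : m → F) (Ωv : Set m)
    (h : ∀ N : Matrix m n F, IsCompletion M ΩM N →
      ∃ w : m → F, (∀ i ∈ Ωv, w i = v i) ∧
        w ∈ Submodule.span F (Set.range fun j : n => fun i : m => N i j)) :
    mr (augMat v M) (augSet Ωv ΩM) = mr M ΩM := by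
  -- rank of [w | N] equals rank of N when w lies in the column span of N
  have key : ∀ (w : m → F) (N : Matrix m n F),
      w ∈ Submodule.span F (Set.range Nᵀ) → (augMat w N).rank = N.rank := by
    intro w N hw
    rw [Matrix.rank_eq_finrank_span_cols, Matrix.rank_eq_finrank_span_cols]
    have hrange : Set.range (augMat w N)ᵀ = insert w (Set.range Nᵀ) := by
      have : (augMat w N)ᵀ = Sum.elim (fun _ : Unit => w) Nᵀ := by
        funext k i
        cases k <;> rfl
      rw [this]
      erw [Set.Sum.elim_range]
      ext x
      simp [Set.range_const, Set.insert_def, eq_comm]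
    rw [Matrix.col, Matrix.col, hrange, Submodule.span_insert_eq_span hw]
  -- nonemptiness of the completion-rank sets
  have hneM : M.rank ∈ {r | ∃ N : Matrix m n F, IsCompletion M ΩM N ∧ N.rank = r} :=
    ⟨M, fun _ _ => rfl, rfl⟩
  have hneA : (augMat v M).rank ∈
      {r | ∃ N : Matrix m (Unit ⊕ n) F,
        IsCompletion (augMat v M) (augSet Ωv ΩM) N ∧ N.rank = r} :=
    ⟨augMat v M, fun _ _ => rfl, rfl⟩
  apply le_antisymm
  · -- mr aug ≤ mr M
    obtain ⟨N, hN, hNrank⟩ := Nat.sInf_mem ⟨M.rank, hneM⟩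
    obtain ⟨w, hw1, hw2⟩ := h N hN
    have hw2' : w ∈ Submodule.span F (Set.range Nᵀ) := by
      exact hw2
    have hcomp : IsCompletion (augMat v M) (augSet Ωv ΩM) (augMat w N) := by
      rintro ⟨i, k⟩ hp
      cases k with
      | inl u => exact hw1 i hp
      | inr j => exact hN (i, j) hp
    calc mr (augMat v M) (augSet Ωv ΩM) ≤ (augMat w N).rank :=
          Nat.sInf_le ⟨augMat w N, hcomp, rfl⟩
      _ = N.rank := key w N hw2'
      _ = mr M ΩM := hNrank
  · -- mr M ≤ mr aug
    obtain ⟨N', hN', hN'rank⟩ := Nat.sInf_mem ⟨(augMat v M).rank, hneA⟩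
    set N : Matrix m n F := Matrix.of fun i j => N' i (Sum.inr j) with hNdef
    have hcomp : IsCompletion M ΩM N := fun p hp => hN' (p.1, Sum.inr p.2) hp
    have hrank : N.rank ≤ N'.rank := by
      rw [Matrix.rank_eq_finrank_span_cols, Matrix.rank_eq_finrank_span_cols]
      apply Submodule.finrank_mono
      apply Submodule.span_mono
      rintro x ⟨j, rfl⟩
      exact ⟨Sum.inr j, rfl⟩
    calc mr M ΩM ≤ N.rank := Nat.sInf_le ⟨N, hcomp, rfl⟩
      _ ≤ N'.rank := hrank
      _ = mr (augMat v M) (augSet Ωv ΩM) := hN'rank
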